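/- Assume J₁, J₂ satisfy condition (J), d₁, d₂ > 0, and A = (a_ij) is a real 2×2 matrix with a₁₂ = a₂₁ > 0; let λ_p denote the principal eigenvalue of Mφ + λφ = 0 on [L₁, L₂]. (a) If there exists a continuous pair φ̃ = (φ̃₁, φ̃₂) on [L₁, L₂] with φ̃₁ ≥ 0, φ̃₂ ≥ 0, neither identically zero, and a constant λ̃ such that (Mφ̃)(x) + λ̃φ̃(x) ≤ 0 componentwise on [L₁, L₂], then λ_p ≥ λ̃; moreover λ_p = λ̃ only if equality holds in both components on [L₁, L₂]. (b) If instead (Mφ̃)(x) + λ̃φ̃(x) ≥ 0 componentwise on [L₁, L₂], then λ_p ≤ λ̃, with λ_p = λ̃ only if equality holds. -/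

import Mathlib

open MeasureTheory Set Filter

noncomputable section

/-- Condition (J) on a dispersal kernel: continuous, bounded, nonnegative, even,
positive at the origin, with total integral one. -/
def KernelCond (J : ℝ → ℝ) : Prop :=
  Continuous J ∧ (∃ C : ℝ, ∀ x : ℝ, |J x| ≤ C) ∧ (∀ x : ℝ, 0 ≤ J x) ∧
    (∀ x : ℝ, J (-x) = J x) ∧ 0 < J 0 ∧ (∫ x : ℝ, J x) = 1

/-- Condition (HG) on the reaction functions `H`, `G` (with constants `a`, `b`). -/
def HGcond (a b : ℝ) (H G : ℝ → ℝ) : Prop :=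
  ContDiffOn ℝ 2 H (Ici 0) ∧ ContDiffOn ℝ 2 G (Ici 0) ∧
    H 0 = 0 ∧ G 0 = 0 ∧
    (∀ z : ℝ, 0 ≤ z → 0 < deriv H z ∧ 0 < deriv G z) ∧
    (∀ z : ℝ, 0 < z → deriv (deriv H) z < 0 ∧ deriv (deriv G) z < 0) ∧
    (∃ zbar : ℝ, 0 < zbar ∧ G (H zbar / a) < b * zbar)

/-- Condition (I) on the initial data. -/
def InitCond (h₀ : ℝ) (u₀ v₀ : ℝ → ℝ) : Prop :=
  ContinuousOn u₀ (Icc (-h₀) h₀) ∧ ContinuousOn v₀ (Icc (-h₀) h₀) ∧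
    u₀ (-h₀) = 0 ∧ u₀ h₀ = 0 ∧ v₀ (-h₀) = 0 ∧ v₀ h₀ = 0 ∧
    (∀ x ∈ Ioo (-h₀) h₀, 0 < u₀ x ∧ 0 < v₀ x)

/-- A (global-in-time) solution of the free boundary problem (P). -/
def IsGlobalSolution (J₁ J₂ H G : ℝ → ℝ) (d₁ d₂ a b μ ρ h₀ : ℝ)
    (u₀ v₀ : ℝ → ℝ) (u v : ℝ → ℝ → ℝ) (g h : ℝ → ℝ) : Prop :=
  ContinuousOn g (Ici 0) ∧ ContinuousOn h (Ici 0) ∧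
  g 0 = -h₀ ∧ h 0 = h₀ ∧
  StrictMonoOn h (Ici 0) ∧ StrictAntiOn g (Ici 0) ∧
  ContinuousOn (fun p : ℝ × ℝ => u p.1 p.2)
    {p : ℝ × ℝ | 0 ≤ p.1 ∧ p.2 ∈ Icc (g p.1) (h p.1)} ∧
  ContinuousOn (fun p : ℝ × ℝ => v p.1 p.2)
    {p : ℝ × ℝ | 0 ≤ p.1 ∧ p.2 ∈ Icc (g p.1) (h p.1)} ∧
  (∀ t : ℝ, 0 ≤ t → ∀ x : ℝ, x ∉ Icc (g t) (h t) → u t x = 0 ∧ v t x = 0) ∧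
  (∀ t : ℝ, 0 ≤ t → ∀ x : ℝ, 0 ≤ u t x ∧ 0 ≤ v t x) ∧
  (∀ t : ℝ, 0 < t → ∀ x ∈ Ioo (g t) (h t),
    HasDerivAt (fun s => u s x)
      (d₁ * ((∫ y in g t..h t, J₁ (x - y) * u t y) - u t x) - a * u t x + H (v t x)) t ∧
    HasDerivAt (fun s => v s x)
      (d₂ * ((∫ y in g t..h t, J₂ (x - y) * v t y) - v t x) - b * v t x + G (u t x)) t) ∧
  (∀ t : ℝ, 0 < t → u t (g t) = 0 ∧ u t (h t) = 0 ∧ v t (g t) = 0 ∧ v t (h t) = 0) ∧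
  (∀ t : ℝ, 0 < t →
    HasDerivAt h
      (μ * ((∫ x in g t..h t, ∫ y in Ioi (h t), J₁ (x - y) * u t x) +
        ρ * (∫ x in g t..h t, ∫ y in Ioi (h t), J₂ (x - y) * v t x))) t ∧
    HasDerivAt g
      (-(μ * ((∫ x in g t..h t, ∫ y in Iio (g t), J₁ (x - y) * u t x) +
        ρ * (∫ x in g t..h t, ∫ y in Iio (g t), J₂ (x - y) * v t x)))) t) ∧
  (∀ x ∈ Icc (-h₀) h₀, u 0 x = u₀ x ∧ v 0 x = v₀ x)

/-- Vanishing: the habitat stays bounded and `(u,v) → (0,0)` uniformly on `[g(t), h(t)]`. -/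
def Vanishing (u v : ℝ → ℝ → ℝ) (g h : ℝ → ℝ) : Prop :=
  (∃ l : ℝ, Tendsto (fun t => h t - g t) atTop (nhds l)) ∧
  (∀ ε : ℝ, 0 < ε → ∃ T : ℝ, ∀ t : ℝ, T ≤ t → ∀ x ∈ Icc (g t) (h t),
    |u t x| < ε ∧ |v t x| < ε)

/-- Spreading: the habitat expands to all of `ℝ` and `(u,v) → (K₁,K₂)` locally uniformly. -/
def Spreading (u v : ℝ → ℝ → ℝ) (g h : ℝ → ℝ) (K₁ K₂ : ℝ) : Prop :=
  Tendsto h atTop atTop ∧ Tendsto g atTop atBot ∧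
  (∀ ε : ℝ, 0 < ε → ∀ R : ℝ, 0 < R → ∃ T : ℝ, ∀ t : ℝ, T ≤ t → ∀ x ∈ Icc (-R) R,
    |u t x - K₁| < ε ∧ |v t x - K₂| < ε)

/-- `lam` is a principal eigenvalue of the nonlocal cooperative operator
`M = D(N - I) + A` on `[L₁, L₂]`: it admits a continuous, componentwise strictly
positive eigenfunction pair. -/
def IsPrincipalEV (J₁ J₂ : ℝ → ℝ) (d₁ d₂ L₁ L₂ a11 a12 a21 a22 lam : ℝ) : Prop :=
  ∃ φ₁ φ₂ : ℝ → ℝ,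
    ContinuousOn φ₁ (Icc L₁ L₂) ∧ ContinuousOn φ₂ (Icc L₁ L₂) ∧
    (∀ x ∈ Icc L₁ L₂, 0 < φ₁ x ∧ 0 < φ₂ x) ∧
    (∀ x ∈ Icc L₁ L₂,
      d₁ * ((∫ y in L₁..L₂, J₁ (x - y) * φ₁ y) - φ₁ x) + a11 * φ₁ x + a12 * φ₂ x
        + lam * φ₁ x = 0 ∧
      d₂ * ((∫ y in L₁..L₂, J₂ (x - y) * φ₂ y) - φ₂ x) + a21 * φ₁ x + a22 * φ₂ x
        + lam * φ₂ x = 0)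

/-- `lam` is the principal eigenvalue `λ_p(L₁, L₂)` of the linearization of the
epidemic system at `(0,0)`. -/
def IsLamP (J₁ J₂ H G : ℝ → ℝ) (d₁ d₂ a b L₁ L₂ lam : ℝ) : Prop :=
  IsPrincipalEV J₁ J₂ (d₁ / deriv H 0) (d₂ / deriv G 0) L₁ L₂
    (-(a / deriv H 0)) 1 1 (-(b / deriv G 0)) lam

/-- A (continuous) solution of the steady-state system on `[L₁, L₂]`. -/
def SteadyState (J₁ J₂ H G : ℝ → ℝ) (d₁ d₂ a b L₁ L₂ : ℝ) (U V : ℝ → ℝ) : Prop :=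
  ContinuousOn U (Icc L₁ L₂) ∧ ContinuousOn V (Icc L₁ L₂) ∧
  ∀ x ∈ Icc L₁ L₂,
    d₁ * ((∫ y in L₁..L₂, J₁ (x - y) * U y) - U x) - a * U x + H (V x) = 0 ∧
    d₂ * ((∫ y in L₁..L₂, J₂ (x - y) * V y) - V x) - b * V x + G (U x) = 0

/-- A solution of the fixed-boundary evolution problem on `[L₁, L₂]`. -/
def FixedSol (J₁ J₂ H G : ℝ → ℝ) (d₁ d₂ a b L₁ L₂ : ℝ) (U₀ V₀ : ℝ → ℝ)
    (U V : ℝ → ℝ → ℝ) : Prop :=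
  ContinuousOn (fun p : ℝ × ℝ => U p.1 p.2) (Ici 0 ×ˢ Icc L₁ L₂) ∧
  ContinuousOn (fun p : ℝ × ℝ => V p.1 p.2) (Ici 0 ×ˢ Icc L₁ L₂) ∧
  (∀ x ∈ Icc L₁ L₂, U 0 x = U₀ x ∧ V 0 x = V₀ x) ∧
  (∀ t : ℝ, 0 < t → ∀ x ∈ Icc L₁ L₂,
    HasDerivAt (fun s => U s x)
      (d₁ * ((∫ y in L₁..L₂, J₁ (x - y) * U t y) - U t x) - a * U t x + H (V t x)) t ∧
    HasDerivAt (fun s => V s x)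
      (d₂ * ((∫ y in L₁..L₂, J₂ (x - y) * V t y) - V t x) - b * V t x + G (U t x)) t)

/-- One component of the nonlocal cooperative operator `M`:
`(Mc J d L₁ L₂ c₁ c₂ φ ψ)(x) = d (∫ J(x-y) φ(y) dy − φ(x)) + c₁ φ(x) + c₂ ψ(x)`. -/
def Mcomp (J : ℝ → ℝ) (d L₁ L₂ c₁ c₂ : ℝ) (φ ψ : ℝ → ℝ) : ℝ → ℝ :=
  fun x => d * ((∫ y in L₁..L₂, J (x - y) * φ y) - φ x) + c₁ * φ x + c₂ * ψ x

private lemma pev_pos_integral {f : ℝ → ℝ} {L₁ L₂ : ℝ} (hL : L₁ < L₂)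
    (hf : ContinuousOn f (Icc L₁ L₂)) (hnn : ∀ x ∈ Icc L₁ L₂, 0 ≤ f x)
    {x₀ : ℝ} (hx₀ : x₀ ∈ Icc L₁ L₂) (hpos : 0 < f x₀) :
    0 < ∫ x in Ioc L₁ L₂, f x := by
  have hev : ∀ᶠ y in nhdsWithin x₀ (Icc L₁ L₂), f x₀ / 2 < f y :=
    (hf x₀ hx₀) (lt_mem_nhds (half_lt_self hpos))
  rw [Filter.Eventually, Metric.mem_nhdsWithin_iff] at hev
  obtain ⟨δ, hδ, hball'⟩ := hev
  have hball : ∀ y ∈ Icc L₁ L₂, dist y x₀ < δ → f x₀ / 2 < f y := fun y hy hd =>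
    hball' ⟨Metric.mem_ball.mpr hd, hy⟩
  set a := max L₁ (x₀ - δ/2) with ha
  set b := min L₂ (x₀ + δ/2) with hb
  have hx₁ : L₁ ≤ x₀ := hx₀.1
  have hx₂ : x₀ ≤ L₂ := hx₀.2
  have hab : a < b := by
    rcases lt_or_eq_of_le hx₂ with h | h
    · have : x₀ < b := lt_min h (by linarith)
      exact lt_of_le_of_lt (max_le hx₁ (by linarith)) this
    · have : a < x₀ := max_lt (h ▸ hL) (by linarith)
      exact this.trans_le (le_min (le_of_eq h) (by linarith))
  have hsub : Ioc a b ⊆ Icc L₁ L₂ := fun y hy =>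
    ⟨le_trans (le_max_left _ _) hy.1.le, le_trans hy.2 (min_le_left _ _)⟩
  have hfar : ∀ y ∈ Ioc a b, f x₀ / 2 < f y := by
    intro y hy
    apply hball y (hsub hy)
    rw [Real.dist_eq, abs_lt]
    have h1 : x₀ - δ/2 ≤ a := le_max_right _ _
    have h2 : b ≤ x₀ + δ/2 := min_le_right _ _
    have h3 : a < y := hy.1
    have h4 : y ≤ b := hy.2
    constructor <;> linarith
  have hint : IntegrableOn f (Ioc L₁ L₂) := hf.integrableOn_Icc.mono_set Ioc_subset_Icc_self
  have h1 : 0 < ∫ x in a..b, f x := by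
    apply intervalIntegral.intervalIntegral_pos_of_pos_on
    · apply ContinuousOn.intervalIntegrable
      rw [uIcc_of_le hab.le]
      exact hf.mono (Icc_subset_Icc (le_max_left _ _) (min_le_left _ _))
    · exact fun x hx => lt_of_le_of_lt (by positivity) (hfar x (Ioo_subset_Ioc_self hx))
    · exact hab
  have h2 : (∫ x in a..b, f x) ≤ ∫ x in Ioc L₁ L₂, f x := by
    rw [intervalIntegral.integral_of_le hab.le]
    apply setIntegral_mono_set hint
    · filter_upwards [ae_restrict_mem measurableSet_Ioc] with y hy
      exact hnn y (Ioc_subset_Icc_self hy)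
    · refine HasSubset.Subset.eventuallyLE (fun y hy => ?_)
      exact ⟨lt_of_le_of_lt (le_max_left _ _) hy.1, le_trans hy.2 (min_le_left _ _)⟩
  linarith

private lemma pev_zero_of_nonneg {f : ℝ → ℝ} {L₁ L₂ : ℝ} (hL : L₁ < L₂)
    (hf : ContinuousOn f (Icc L₁ L₂)) (hnn : ∀ x ∈ Icc L₁ L₂, 0 ≤ f x)
    (hint : (∫ x in Ioc L₁ L₂, f x) = 0) : ∀ x ∈ Icc L₁ L₂, f x = 0 := by
  intro x hx
  by_contra hne
  have hpos : 0 < f x := lt_of_le_of_ne (hnn x hx) (Ne.symm hne)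
  have := pev_pos_integral hL hf hnn hx hpos
  linarith

private lemma pev_intOn {f : ℝ → ℝ} {L₁ L₂ : ℝ} (hf : ContinuousOn f (Icc L₁ L₂)) :
    IntegrableOn f (Ioc L₁ L₂) :=
  hf.integrableOn_Icc.mono_set Ioc_subset_Icc_self

private lemma pev_Kcont {J f : ℝ → ℝ} {L₁ L₂ : ℝ} (hJc : Continuous J)
    {C : ℝ} (hC : ∀ x, |J x| ≤ C) (hf : ContinuousOn f (Icc L₁ L₂)) :
    Continuous fun x => ∫ y in Ioc L₁ L₂, J (x - y) * f y := by
  obtain ⟨M, hM⟩ := isCompact_Icc.exists_bound_of_continuousOn hf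
  have hC0 : 0 ≤ C := le_trans (abs_nonneg _) (hC 0)
  have hfm : AEStronglyMeasurable f (volume.restrict (Ioc L₁ L₂)) :=
    (hf.mono Ioc_subset_Icc_self).aestronglyMeasurable measurableSet_Ioc
  apply continuous_of_dominated (bound := fun _ => C * max M 0)
  · intro x
    exact ((hJc.comp (continuous_const.sub continuous_id)).aestronglyMeasurable).mul hfm
  · intro x
    filter_upwards [ae_restrict_mem measurableSet_Ioc] with y hy
    have h2 : ‖f y‖ ≤ max M 0 := le_trans (hM y (Ioc_subset_Icc_self hy)) (le_max_left _ _)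
    rw [norm_mul, Real.norm_eq_abs]
    exact mul_le_mul (hC _) h2 (norm_nonneg _) hC0
  · exact integrable_const _
  · exact Eventually.of_forall fun y =>
      (hJc.comp (continuous_id.sub continuous_const)).mul continuous_const

private lemma pev_swap {J f g : ℝ → ℝ} {L₁ L₂ : ℝ} (hJc : Continuous J)
    {C : ℝ} (hC : ∀ x, |J x| ≤ C) (hJe : ∀ x, J (-x) = J x)
    (hf : ContinuousOn f (Icc L₁ L₂)) (hg : ContinuousOn g (Icc L₁ L₂)) :
    ∫ x in Ioc L₁ L₂, (∫ y in Ioc L₁ L₂, J (x - y) * f y) * g x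
      = ∫ x in Ioc L₁ L₂, (∫ y in Ioc L₁ L₂, J (x - y) * g y) * f x := by
  obtain ⟨Mf, hMf⟩ := isCompact_Icc.exists_bound_of_continuousOn hf
  obtain ⟨Mg, hMg⟩ := isCompact_Icc.exists_bound_of_continuousOn hg
  have hC0 : 0 ≤ C := le_trans (abs_nonneg _) (hC 0)
  have hfm : AEStronglyMeasurable f (volume.restrict (Ioc L₁ L₂)) :=
    (hf.mono Ioc_subset_Icc_self).aestronglyMeasurable measurableSet_Ioc
  have hgm : AEStronglyMeasurable g (volume.restrict (Ioc L₁ L₂)) :=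
    (hg.mono Ioc_subset_Icc_self).aestronglyMeasurable measurableSet_Ioc
  have hint : Integrable (Function.uncurry fun x y => J (x - y) * f y * g x)
      ((volume.restrict (Ioc L₁ L₂)).prod (volume.restrict (Ioc L₁ L₂))) := by
    have hmeas : AEStronglyMeasurable (fun z : ℝ × ℝ => J (z.1 - z.2) * f z.2 * g z.1)
        ((volume.restrict (Ioc L₁ L₂)).prod (volume.restrict (Ioc L₁ L₂))) :=
      (((hJc.comp (continuous_fst.sub continuous_snd)).aestronglyMeasurable).mul hfm.comp_snd).mul
        hgm.comp_fst
    refine (integrable_const (C * max Mf 0 * max Mg 0)).mono' hmeas ?_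
    rw [Measure.prod_restrict]
    filter_upwards [ae_restrict_mem (measurableSet_Ioc.prod measurableSet_Ioc)] with z hz
    have hf' : ‖f z.2‖ ≤ max Mf 0 :=
      le_trans (hMf _ (Ioc_subset_Icc_self hz.2)) (le_max_left _ _)
    have hg' : ‖g z.1‖ ≤ max Mg 0 :=
      le_trans (hMg _ (Ioc_subset_Icc_self hz.1)) (le_max_left _ _)
    simp only [Function.uncurry]
    rw [norm_mul, norm_mul, Real.norm_eq_abs (J _)]
    exact mul_le_mul (mul_le_mul (hC _) hf' (norm_nonneg _) hC0) hg' (norm_nonneg _)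
      (by positivity)
  have key : ∀ y x : ℝ, J (x - y) * f y * g x = J (y - x) * g x * f y := by
    intro y x
    rw [show (x - y) = -(y - x) by ring, hJe]
    ring
  have step1 : ∀ x : ℝ, (∫ y in Ioc L₁ L₂, J (x - y) * f y) * g x
      = ∫ y in Ioc L₁ L₂, J (x - y) * f y * g x := fun x => (integral_mul_const _ _).symm
  simp_rw [step1]
  rw [MeasureTheory.integral_integral_swap hint]
  simp_rw [key, integral_mul_const]

private lemma pev_core
    {J₁ J₂ : ℝ → ℝ} (hJc₁ : Continuous J₁) (hJc₂ : Continuous J₂)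
    {C₁ C₂ : ℝ} (hC₁ : ∀ x, |J₁ x| ≤ C₁) (hC₂ : ∀ x, |J₂ x| ≤ C₂)
    (hJe₁ : ∀ x, J₁ (-x) = J₁ x) (hJe₂ : ∀ x, J₂ (-x) = J₂ x)
    {d₁ d₂ L₁ L₂ a11 a12 a21 a22 lamP lamT : ℝ}
    (hL : L₁ < L₂) (hsym : a12 = a21)
    {φ₁ φ₂ : ℝ → ℝ}
    (hφc1 : ContinuousOn φ₁ (Icc L₁ L₂)) (hφc2 : ContinuousOn φ₂ (Icc L₁ L₂))
    (heig : ∀ x ∈ Icc L₁ L₂,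
      d₁ * ((∫ y in L₁..L₂, J₁ (x - y) * φ₁ y) - φ₁ x) + a11 * φ₁ x + a12 * φ₂ x
        + lamP * φ₁ x = 0 ∧
      d₂ * ((∫ y in L₁..L₂, J₂ (x - y) * φ₂ y) - φ₂ x) + a21 * φ₁ x + a22 * φ₂ x
        + lamP * φ₂ x = 0)
    {φt₁ φt₂ : ℝ → ℝ}
    (ht1 : ContinuousOn φt₁ (Icc L₁ L₂)) (ht2 : ContinuousOn φt₂ (Icc L₁ L₂)) :
    ∫ x in Ioc L₁ L₂,
      ((d₁ * ((∫ y in L₁..L₂, J₁ (x - y) * φt₁ y) - φt₁ x) + a11 * φt₁ x + a12 * φt₂ x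
          + lamT * φt₁ x) * φ₁ x +
       (d₂ * ((∫ y in L₁..L₂, J₂ (x - y) * φt₂ y) - φt₂ x) + a21 * φt₁ x + a22 * φt₂ x
          + lamT * φt₂ x) * φ₂ x)
      = (lamT - lamP) * ∫ x in Ioc L₁ L₂, (φt₁ x * φ₁ x + φt₂ x * φ₂ x) := by
  have hk1c : Continuous fun x => ∫ y in Ioc L₁ L₂, J₁ (x - y) * φt₁ y := pev_Kcont hJc₁ hC₁ ht1
  have hk2c : Continuous fun x => ∫ y in Ioc L₁ L₂, J₂ (x - y) * φt₂ y := pev_Kcont hJc₂ hC₂ ht2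
  have he1c : Continuous fun x => ∫ y in Ioc L₁ L₂, J₁ (x - y) * φ₁ y := pev_Kcont hJc₁ hC₁ hφc1
  have he2c : Continuous fun x => ∫ y in Ioc L₁ L₂, J₂ (x - y) * φ₂ y := pev_Kcont hJc₂ hC₂ hφc2
  have heig' : ∀ x ∈ Icc L₁ L₂,
      d₁ * ((∫ y in Ioc L₁ L₂, J₁ (x - y) * φ₁ y) - φ₁ x) + a11 * φ₁ x + a12 * φ₂ x
        + lamP * φ₁ x = 0 ∧
      d₂ * ((∫ y in Ioc L₁ L₂, J₂ (x - y) * φ₂ y) - φ₂ x) + a21 * φ₁ x + a22 * φ₂ x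
        + lamP * φ₂ x = 0 := by
    simpa only [intervalIntegral.integral_of_le hL.le] using heig
  simp only [intervalIntegral.integral_of_le hL.le]
  have hpt : EqOn
      (fun x =>
        (d₁ * ((∫ y in Ioc L₁ L₂, J₁ (x - y) * φt₁ y) - φt₁ x) + a11 * φt₁ x + a12 * φt₂ x
          + lamT * φt₁ x) * φ₁ x +
        (d₂ * ((∫ y in Ioc L₁ L₂, J₂ (x - y) * φt₂ y) - φt₂ x) + a21 * φt₁ x + a22 * φt₂ x
          + lamT * φt₂ x) * φ₂ x)
      (fun x =>
        (d₁ * ((∫ y in Ioc L₁ L₂, J₁ (x - y) * φt₁ y) * φ₁ x)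
          - d₁ * ((∫ y in Ioc L₁ L₂, J₁ (x - y) * φ₁ y) * φt₁ x)) +
        ((d₂ * ((∫ y in Ioc L₁ L₂, J₂ (x - y) * φt₂ y) * φ₂ x)
          - d₂ * ((∫ y in Ioc L₁ L₂, J₂ (x - y) * φ₂ y) * φt₂ x)) +
         (lamT - lamP) * (φt₁ x * φ₁ x + φt₂ x * φ₂ x)))
      (Ioc L₁ L₂) := by
    intro x hx
    obtain ⟨h1, h2⟩ := heig' x (Ioc_subset_Icc_self hx)
    simp only
    linear_combination φt₁ x * h1 + φt₂ x * h2 + (φt₂ x * φ₁ x - φt₁ x * φ₂ x) * hsym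
  rw [setIntegral_congr_fun measurableSet_Ioc hpt]
  have i1 : IntegrableOn (fun x => d₁ * ((∫ y in Ioc L₁ L₂, J₁ (x - y) * φt₁ y) * φ₁ x))
      (Ioc L₁ L₂) := pev_intOn (continuousOn_const.mul (hk1c.continuousOn.mul hφc1))
  have i2 : IntegrableOn (fun x => d₁ * ((∫ y in Ioc L₁ L₂, J₁ (x - y) * φ₁ y) * φt₁ x))
      (Ioc L₁ L₂) := pev_intOn (continuousOn_const.mul (he1c.continuousOn.mul ht1))
  have i3 : IntegrableOn (fun x => d₂ * ((∫ y in Ioc L₁ L₂, J₂ (x - y) * φt₂ y) * φ₂ x))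
      (Ioc L₁ L₂) := pev_intOn (continuousOn_const.mul (hk2c.continuousOn.mul hφc2))
  have i4 : IntegrableOn (fun x => d₂ * ((∫ y in Ioc L₁ L₂, J₂ (x - y) * φ₂ y) * φt₂ x))
      (Ioc L₁ L₂) := pev_intOn (continuousOn_const.mul (he2c.continuousOn.mul ht2))
  have i5 : IntegrableOn (fun x => (lamT - lamP) * (φt₁ x * φ₁ x + φt₂ x * φ₂ x))
      (Ioc L₁ L₂) := pev_intOn (continuousOn_const.mul ((ht1.mul hφc1).add (ht2.mul hφc2)))
  have i12 : IntegrableOn (fun x => d₁ * ((∫ y in Ioc L₁ L₂, J₁ (x - y) * φt₁ y) * φ₁ x)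
      - d₁ * ((∫ y in Ioc L₁ L₂, J₁ (x - y) * φ₁ y) * φt₁ x)) (Ioc L₁ L₂) := i1.sub i2
  have i34 : IntegrableOn (fun x => d₂ * ((∫ y in Ioc L₁ L₂, J₂ (x - y) * φt₂ y) * φ₂ x)
      - d₂ * ((∫ y in Ioc L₁ L₂, J₂ (x - y) * φ₂ y) * φt₂ x)) (Ioc L₁ L₂) := i3.sub i4
  have i345 : IntegrableOn (fun x => (d₂ * ((∫ y in Ioc L₁ L₂, J₂ (x - y) * φt₂ y) * φ₂ x)
      - d₂ * ((∫ y in Ioc L₁ L₂, J₂ (x - y) * φ₂ y) * φt₂ x))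
      + (lamT - lamP) * (φt₁ x * φ₁ x + φt₂ x * φ₂ x)) (Ioc L₁ L₂) := i34.add i5
  rw [integral_add i12 i345, integral_add i34 i5,
    integral_sub i1 i2, integral_sub i3 i4, integral_const_mul, integral_const_mul,
    integral_const_mul, integral_const_mul, integral_const_mul,
    pev_swap hJc₁ hC₁ hJe₁ ht1 hφc1, pev_swap hJc₂ hC₂ hJe₂ ht2 hφc2]
  ring

/-- sub/supersolution comparison with the principal eigenvalue. -/
theorem principal_eigenvalue_sub_super_comparison
    (J₁ J₂ : ℝ → ℝ) (hJ₁ : KernelCond J₁) (hJ₂ : KernelCond J₂)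
    (d₁ d₂ L₁ L₂ a11 a12 a21 a22 lamP : ℝ)
    (hd₁ : 0 < d₁) (hd₂ : 0 < d₂) (hL : L₁ < L₂)
    (hsym : a12 = a21) (ha12 : 0 < a12)
    (hp : IsPrincipalEV J₁ J₂ d₁ d₂ L₁ L₂ a11 a12 a21 a22 lamP) :
    -- (a) supersolution inequality `Mφ̃ + λ̃φ̃ ≤ 0` forces `λ_p ≥ λ̃`
    (∀ φt₁ φt₂ : ℝ → ℝ, ∀ lamT : ℝ,
      ContinuousOn φt₁ (Icc L₁ L₂) → ContinuousOn φt₂ (Icc L₁ L₂) →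
      (∀ x ∈ Icc L₁ L₂, 0 ≤ φt₁ x ∧ 0 ≤ φt₂ x) →
      (¬ ∀ x ∈ Icc L₁ L₂, φt₁ x = 0) → (¬ ∀ x ∈ Icc L₁ L₂, φt₂ x = 0) →
      (∀ x ∈ Icc L₁ L₂,
        d₁ * ((∫ y in L₁..L₂, J₁ (x - y) * φt₁ y) - φt₁ x) + a11 * φt₁ x
          + a12 * φt₂ x + lamT * φt₁ x ≤ 0 ∧
        d₂ * ((∫ y in L₁..L₂, J₂ (x - y) * φt₂ y) - φt₂ x) + a21 * φt₁ x
          + a22 * φt₂ x + lamT * φt₂ x ≤ 0) →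
      lamT ≤ lamP ∧
        (lamP = lamT → ∀ x ∈ Icc L₁ L₂,
          d₁ * ((∫ y in L₁..L₂, J₁ (x - y) * φt₁ y) - φt₁ x) + a11 * φt₁ x
            + a12 * φt₂ x + lamT * φt₁ x = 0 ∧
          d₂ * ((∫ y in L₁..L₂, J₂ (x - y) * φt₂ y) - φt₂ x) + a21 * φt₁ x
            + a22 * φt₂ x + lamT * φt₂ x = 0)) ∧
    -- (b) subsolution inequality `Mφ̃ + λ̃φ̃ ≥ 0` forces `λ_p ≤ λ̃`
    (∀ φt₁ φt₂ : ℝ → ℝ, ∀ lamT : ℝ,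
      ContinuousOn φt₁ (Icc L₁ L₂) → ContinuousOn φt₂ (Icc L₁ L₂) →
      (∀ x ∈ Icc L₁ L₂, 0 ≤ φt₁ x ∧ 0 ≤ φt₂ x) →
      (¬ ∀ x ∈ Icc L₁ L₂, φt₁ x = 0) → (¬ ∀ x ∈ Icc L₁ L₂, φt₂ x = 0) →
      (∀ x ∈ Icc L₁ L₂,
        0 ≤ d₁ * ((∫ y in L₁..L₂, J₁ (x - y) * φt₁ y) - φt₁ x) + a11 * φt₁ x
          + a12 * φt₂ x + lamT * φt₁ x ∧
        0 ≤ d₂ * ((∫ y in L₁..L₂, J₂ (x - y) * φt₂ y) - φt₂ x) + a21 * φt₁ x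
          + a22 * φt₂ x + lamT * φt₂ x) →
      lamP ≤ lamT ∧
        (lamP = lamT → ∀ x ∈ Icc L₁ L₂,
          d₁ * ((∫ y in L₁..L₂, J₁ (x - y) * φt₁ y) - φt₁ x) + a11 * φt₁ x
            + a12 * φt₂ x + lamT * φt₁ x = 0 ∧
          d₂ * ((∫ y in L₁..L₂, J₂ (x - y) * φt₂ y) - φt₂ x) + a21 * φt₁ x
            + a22 * φt₂ x + lamT * φt₂ x = 0)) := by
  obtain ⟨hJc₁, ⟨C₁, hC₁⟩, hJnn₁, hJe₁, hJ0₁, -⟩ := hJ₁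
  obtain ⟨hJc₂, ⟨C₂, hC₂⟩, hJnn₂, hJe₂, hJ0₂, -⟩ := hJ₂
  obtain ⟨φ₁, φ₂, hφc1, hφc2, hφpos, heig⟩ := hp
  have main : ∀ φt₁ φt₂ : ℝ → ℝ,
      ContinuousOn φt₁ (Icc L₁ L₂) → ContinuousOn φt₂ (Icc L₁ L₂) →
      (∀ x ∈ Icc L₁ L₂, 0 ≤ φt₁ x ∧ 0 ≤ φt₂ x) →
      (¬ ∀ x ∈ Icc L₁ L₂, φt₁ x = 0) →
      (0 < ∫ x in Ioc L₁ L₂, (φt₁ x * φ₁ x + φt₂ x * φ₂ x)) ∧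
      ∀ lamT : ℝ, ContinuousOn (fun x =>
        (d₁ * ((∫ y in L₁..L₂, J₁ (x - y) * φt₁ y) - φt₁ x) + a11 * φt₁ x + a12 * φt₂ x
          + lamT * φt₁ x) * φ₁ x +
        (d₂ * ((∫ y in L₁..L₂, J₂ (x - y) * φt₂ y) - φt₂ x) + a21 * φt₁ x + a22 * φt₂ x
          + lamT * φt₂ x) * φ₂ x) (Icc L₁ L₂) := by
    intro φt₁ φt₂ ht1 ht2 hnn hne1
    constructor
    · push_neg at hne1
      obtain ⟨x₀, hx₀, hx₀ne⟩ := hne1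
      have hx₀pos : 0 < φt₁ x₀ := lt_of_le_of_ne (hnn x₀ hx₀).1 (Ne.symm hx₀ne)
      apply pev_pos_integral hL ((ht1.mul hφc1).add (ht2.mul hφc2))
        (fun x hx => add_nonneg (mul_nonneg (hnn x hx).1 (hφpos x hx).1.le)
          (mul_nonneg (hnn x hx).2 (hφpos x hx).2.le)) hx₀
      have := mul_pos hx₀pos (hφpos x₀ hx₀).1
      have := mul_nonneg (hnn x₀ hx₀).2 (hφpos x₀ hx₀).2.le
      show 0 < φt₁ x₀ * φ₁ x₀ + φt₂ x₀ * φ₂ x₀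
      linarith
    · intro lamT
      have hKt1 : Continuous fun x => ∫ y in L₁..L₂, J₁ (x - y) * φt₁ y := by
        simp only [intervalIntegral.integral_of_le hL.le]
        exact pev_Kcont hJc₁ hC₁ ht1
      have hKt2 : Continuous fun x => ∫ y in L₁..L₂, J₂ (x - y) * φt₂ y := by
        simp only [intervalIntegral.integral_of_le hL.le]
        exact pev_Kcont hJc₂ hC₂ ht2
      refine ContinuousOn.add (ContinuousOn.mul ?_ hφc1) (ContinuousOn.mul ?_ hφc2)
      · exact (((continuousOn_const.mul (hKt1.continuousOn.sub ht1)).add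
          (continuousOn_const.mul ht1)).add (continuousOn_const.mul ht2)).add
          (continuousOn_const.mul ht1)
      · exact (((continuousOn_const.mul (hKt2.continuousOn.sub ht2)).add
          (continuousOn_const.mul ht1)).add (continuousOn_const.mul ht2)).add
          (continuousOn_const.mul ht2)
  constructor
  · intro φt₁ φt₂ lamT ht1 ht2 hnn hne1 hne2 hsub
    obtain ⟨hT, hRc'⟩ := main φt₁ φt₂ ht1 ht2 hnn hne1
    have hRc := hRc' lamT
    have hcore := pev_core hJc₁ hJc₂ hC₁ hC₂ hJe₁ hJe₂ hL hsym hφc1 hφc2 heig ht1 ht2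
      (lamT := lamT)
    have hRle : ∀ x ∈ Icc L₁ L₂,
        (d₁ * ((∫ y in L₁..L₂, J₁ (x - y) * φt₁ y) - φt₁ x) + a11 * φt₁ x + a12 * φt₂ x
          + lamT * φt₁ x) * φ₁ x +
        (d₂ * ((∫ y in L₁..L₂, J₂ (x - y) * φt₂ y) - φt₂ x) + a21 * φt₁ x + a22 * φt₂ x
          + lamT * φt₂ x) * φ₂ x ≤ 0 := fun x hx =>
      add_nonpos (mul_nonpos_of_nonpos_of_nonneg (hsub x hx).1 (hφpos x hx).1.le)
        (mul_nonpos_of_nonpos_of_nonneg (hsub x hx).2 (hφpos x hx).2.le)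
    have hSle : (∫ x in Ioc L₁ L₂,
        ((d₁ * ((∫ y in L₁..L₂, J₁ (x - y) * φt₁ y) - φt₁ x) + a11 * φt₁ x + a12 * φt₂ x
          + lamT * φt₁ x) * φ₁ x +
        (d₂ * ((∫ y in L₁..L₂, J₂ (x - y) * φt₂ y) - φt₂ x) + a21 * φt₁ x + a22 * φt₂ x
          + lamT * φt₂ x) * φ₂ x)) ≤ 0 := by
      apply integral_nonpos_of_ae
      filter_upwards [ae_restrict_mem measurableSet_Ioc] with x hx
      exact hRle x (Ioc_subset_Icc_self hx)
    have hle : lamT ≤ lamP := by nlinarith [hcore.symm.trans_le hSle]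
    refine ⟨hle, ?_⟩
    intro hEq x hx
    have hS0 : (∫ x in Ioc L₁ L₂,
        ((d₁ * ((∫ y in L₁..L₂, J₁ (x - y) * φt₁ y) - φt₁ x) + a11 * φt₁ x + a12 * φt₂ x
          + lamT * φt₁ x) * φ₁ x +
        (d₂ * ((∫ y in L₁..L₂, J₂ (x - y) * φt₂ y) - φt₂ x) + a21 * φt₁ x + a22 * φt₂ x
          + lamT * φt₂ x) * φ₂ x)) = 0 := by
      rw [hcore, hEq]; ring
    have hzero := pev_zero_of_nonneg hL hRc.neg
      (fun y hy => neg_nonneg.mpr (hRle y hy)) (by simp only [Pi.neg_apply]; rw [integral_neg, hS0, neg_zero]) x hx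
    have hR0 : (d₁ * ((∫ y in L₁..L₂, J₁ (x - y) * φt₁ y) - φt₁ x) + a11 * φt₁ x
          + a12 * φt₂ x + lamT * φt₁ x) * φ₁ x +
        (d₂ * ((∫ y in L₁..L₂, J₂ (x - y) * φt₂ y) - φt₂ x) + a21 * φt₁ x + a22 * φt₂ x
          + lamT * φt₂ x) * φ₂ x = 0 := by
      have := hzero
      simp only [Pi.neg_apply, neg_eq_zero] at this
      exact this
    have h1 : (d₁ * ((∫ y in L₁..L₂, J₁ (x - y) * φt₁ y) - φt₁ x) + a11 * φt₁ x
        + a12 * φt₂ x + lamT * φt₁ x) * φ₁ x ≤ 0 :=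
      mul_nonpos_of_nonpos_of_nonneg (hsub x hx).1 (hφpos x hx).1.le
    have h2 : (d₂ * ((∫ y in L₁..L₂, J₂ (x - y) * φt₂ y) - φt₂ x) + a21 * φt₁ x
        + a22 * φt₂ x + lamT * φt₂ x) * φ₂ x ≤ 0 :=
      mul_nonpos_of_nonpos_of_nonneg (hsub x hx).2 (hφpos x hx).2.le
    constructor
    · have hm : (d₁ * ((∫ y in L₁..L₂, J₁ (x - y) * φt₁ y) - φt₁ x) + a11 * φt₁ x
          + a12 * φt₂ x + lamT * φt₁ x) * φ₁ x = 0 := by linarith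
      exact (mul_eq_zero.mp hm).resolve_right (ne_of_gt (hφpos x hx).1)
    · have hm : (d₂ * ((∫ y in L₁..L₂, J₂ (x - y) * φt₂ y) - φt₂ x) + a21 * φt₁ x
          + a22 * φt₂ x + lamT * φt₂ x) * φ₂ x = 0 := by linarith
      exact (mul_eq_zero.mp hm).resolve_right (ne_of_gt (hφpos x hx).2)
  · intro φt₁ φt₂ lamT ht1 ht2 hnn hne1 hne2 hsub
    obtain ⟨hT, hRc'⟩ := main φt₁ φt₂ ht1 ht2 hnn hne1
    have hRc := hRc' lamT
    have hcore := pev_core hJc₁ hJc₂ hC₁ hC₂ hJe₁ hJe₂ hL hsym hφc1 hφc2 heig ht1 ht2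
      (lamT := lamT)
    have hRge : ∀ x ∈ Icc L₁ L₂, 0 ≤
        (d₁ * ((∫ y in L₁..L₂, J₁ (x - y) * φt₁ y) - φt₁ x) + a11 * φt₁ x + a12 * φt₂ x
          + lamT * φt₁ x) * φ₁ x +
        (d₂ * ((∫ y in L₁..L₂, J₂ (x - y) * φt₂ y) - φt₂ x) + a21 * φt₁ x + a22 * φt₂ x
          + lamT * φt₂ x) * φ₂ x := fun x hx =>
      add_nonneg (mul_nonneg (hsub x hx).1 (hφpos x hx).1.le)
        (mul_nonneg (hsub x hx).2 (hφpos x hx).2.le)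
    have hSge : 0 ≤ (∫ x in Ioc L₁ L₂,
        ((d₁ * ((∫ y in L₁..L₂, J₁ (x - y) * φt₁ y) - φt₁ x) + a11 * φt₁ x + a12 * φt₂ x
          + lamT * φt₁ x) * φ₁ x +
        (d₂ * ((∫ y in L₁..L₂, J₂ (x - y) * φt₂ y) - φt₂ x) + a21 * φt₁ x + a22 * φt₂ x
          + lamT * φt₂ x) * φ₂ x)) := by
      apply integral_nonneg_of_ae
      filter_upwards [ae_restrict_mem measurableSet_Ioc] with x hx
      exact hRge x (Ioc_subset_Icc_self hx)
    have hle : lamP ≤ lamT := by nlinarith [hcore ▸ hSge]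
    refine ⟨hle, ?_⟩
    intro hEq x hx
    have hS0 : (∫ x in Ioc L₁ L₂,
        ((d₁ * ((∫ y in L₁..L₂, J₁ (x - y) * φt₁ y) - φt₁ x) + a11 * φt₁ x + a12 * φt₂ x
          + lamT * φt₁ x) * φ₁ x +
        (d₂ * ((∫ y in L₁..L₂, J₂ (x - y) * φt₂ y) - φt₂ x) + a21 * φt₁ x + a22 * φt₂ x
          + lamT * φt₂ x) * φ₂ x)) = 0 := by
      rw [hcore, hEq]; ring
    have hR0 := pev_zero_of_nonneg hL hRc hRge hS0 x hx
    have h1 : 0 ≤ (d₁ * ((∫ y in L₁..L₂, J₁ (x - y) * φt₁ y) - φt₁ x) + a11 * φt₁ x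
        + a12 * φt₂ x + lamT * φt₁ x) * φ₁ x :=
      mul_nonneg (hsub x hx).1 (hφpos x hx).1.le
    have h2 : 0 ≤ (d₂ * ((∫ y in L₁..L₂, J₂ (x - y) * φt₂ y) - φt₂ x) + a21 * φt₁ x
        + a22 * φt₂ x + lamT * φt₂ x) * φ₂ x :=
      mul_nonneg (hsub x hx).2 (hφpos x hx).2.le
    constructor
    · have hm : (d₁ * ((∫ y in L₁..L₂, J₁ (x - y) * φt₁ y) - φt₁ x) + a11 * φt₁ x
          + a12 * φt₂ x + lamT * φt₁ x) * φ₁ x = 0 := by linarith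
      exact (mul_eq_zero.mp hm).resolve_right (ne_of_gt (hφpos x hx).1)
    · have hm : (d₂ * ((∫ y in L₁..L₂, J₂ (x - y) * φt₂ y) - φt₂ x) + a21 * φt₁ x
          + a22 * φt₂ x + lamT * φt₂ x) * φ₂ x = 0 := by linarith
      exact (mul_eq_zero.mp hm).resolve_right (ne_of_gt (hφpos x hx).2)


end
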